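/- Let π be a minimal valid function. Suppose that for every minimal valid function π', the inclusion E(π) ⊆ E(π') implies π' = π. Then π is a facet. -/

import Mathlib

/-- A finite-support function `y : ℝ → ℕ` is feasible if `∑ r, r·y(r) − f ∈ ℤ`. -/
def Feasible (f : ℝ) (y : ℝ →₀ ℕ) : Prop :=
  ∃ z : ℤ, (∑ r ∈ y.support, r * (y r : ℝ)) - f = (z : ℝ)

/-- `π` is a valid function: nonnegative, and `∑ r, π(r)·y(r) ≥ 1` for every feasible `y`. -/
def Valid (f : ℝ) (π : ℝ → ℝ) : Prop :=
  (∀ x, 0 ≤ π x) ∧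
    ∀ y : ℝ →₀ ℕ, Feasible f y → 1 ≤ ∑ r ∈ y.support, π r * (y r : ℝ)

/-- A valid function is minimal if no other valid function is pointwise ≤ it. -/
def MinimalValid (f : ℝ) (π : ℝ → ℝ) : Prop :=
  Valid f π ∧ ¬ ∃ π' : ℝ → ℝ, Valid f π' ∧ (∀ x, π' x ≤ π x) ∧ π' ≠ π

/-- `P(π)`: the set of feasible `y` with `∑ r, π(r)·y(r) = 1`. -/
def Pset (f : ℝ) (π : ℝ → ℝ) : Set (ℝ →₀ ℕ) :=
  {y | Feasible f y ∧ ∑ r ∈ y.support, π r * (y r : ℝ) = 1}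

/-- `E(π) = {(x,y) : π(x) + π(y) = π(x+y)}`. -/
def Eset (π : ℝ → ℝ) : Set (ℝ × ℝ) :=
  {p | π p.1 + π p.2 = π (p.1 + p.2)}

/-- A valid function `π` is a facet if every valid `π'` with `P(π) ⊆ P(π')` equals `π`. -/
def IsFacet (f : ℝ) (π : ℝ → ℝ) : Prop :=
  Valid f π ∧ ∀ π' : ℝ → ℝ, Valid f π' → Pset f π ⊆ Pset f π' → π' = π

/-- A valid function `π` is a weak facet if every valid `π'` with `P(π) ⊆ P(π')`
has `P(π) = P(π')`. -/
def IsWeakFacet (f : ℝ) (π : ℝ → ℝ) : Prop :=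
  Valid f π ∧ ∀ π' : ℝ → ℝ, Valid f π' → Pset f π ⊆ Pset f π' → Pset f π = Pset f π'

/-- A valid function `π` is extreme if whenever `π = (π¹ + π²)/2` with `π¹, π²` valid,
then `π¹ = π² = π`. -/
def ExtremeFunc (f : ℝ) (π : ℝ → ℝ) : Prop :=
  Valid f π ∧ ∀ π₁ π₂ : ℝ → ℝ, Valid f π₁ → Valid f π₂ →
    (∀ x, π x = (π₁ x + π₂ x) / 2) → π₁ = π ∧ π₂ = π

/-- `π` is piecewise linear: there is a closed, discrete set `B ⊆ ℝ` of breakpoints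
such that `π` is affine on each connected component of `ℝ \ B`. -/
def PiecewiseLinear (π : ℝ → ℝ) : Prop :=
  ∃ B : Set ℝ, IsClosed B ∧
    (∀ x ∈ B, ∃ ε > (0 : ℝ), ∀ y ∈ B, |y - x| < ε → y = x) ∧
    (∀ x ∉ B, ∃ a b : ℝ, ∀ z ∈ connectedComponentIn Bᶜ x, π z = a * z + b)

/-- `π` is continuous piecewise linear. -/
def ContPiecewiseLinear (π : ℝ → ℝ) : Prop :=
  PiecewiseLinear π ∧ Continuous π

set_option linter.unusedVariables false

namespace GJaux

/-- evaluation of a function against a finsupp -/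
def fval (g : ℝ → ℝ) (y : ℝ →₀ ℕ) : ℝ := ∑ r ∈ y.support, g r * (y r : ℝ)

lemma fval_def (g : ℝ → ℝ) (y : ℝ →₀ ℕ) :
    fval g y = ∑ r ∈ y.support, g r * (y r : ℝ) := rfl

lemma fval_eq_sum (g : ℝ → ℝ) (y : ℝ →₀ ℕ) :
    fval g y = y.sum (fun r n => g r * (n : ℝ)) := rfl

lemma fval_add (g : ℝ → ℝ) (u v : ℝ →₀ ℕ) : fval g (u + v) = fval g u + fval g v := by
  simp only [fval_eq_sum]
  exact Finsupp.sum_add_index' (by simp) (by intro a b c; push_cast; ring)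

lemma fval_single (g : ℝ → ℝ) (a : ℝ) (n : ℕ) :
    fval g (Finsupp.single a n) = g a * (n : ℝ) := by
  rw [fval_eq_sum]
  exact Finsupp.sum_single_index (by simp)

/-- weighted sum -/
def wsum (y : ℝ →₀ ℕ) : ℝ := ∑ r ∈ y.support, r * (y r : ℝ)

lemma wsum_def (y : ℝ →₀ ℕ) : wsum y = ∑ r ∈ y.support, r * (y r : ℝ) := rfl

lemma wsum_eq_sum (y : ℝ →₀ ℕ) : wsum y = y.sum (fun r n => r * (n : ℝ)) := rfl

lemma wsum_add (u v : ℝ →₀ ℕ) : wsum (u + v) = wsum u + wsum v := by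
  simp only [wsum_eq_sum]
  exact Finsupp.sum_add_index' (by simp) (by intro a b c; push_cast; ring)

lemma wsum_single (a : ℝ) (n : ℕ) : wsum (Finsupp.single a n) = a * (n : ℝ) := by
  rw [wsum_eq_sum]
  exact Finsupp.sum_single_index (by simp)

lemma fval_erase (g : ℝ → ℝ) (y : ℝ →₀ ℕ) (x₀ : ℝ) :
    fval g (y.erase x₀) = ∑ r ∈ y.support.erase x₀, g r * (y r : ℝ) := by
  rw [fval_def, Finsupp.support_erase]
  refine Finset.sum_congr rfl fun r hr => ?_
  rw [Finsupp.erase_ne (Finset.ne_of_mem_erase hr)]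

lemma wsum_erase (y : ℝ →₀ ℕ) (x₀ : ℝ) :
    wsum (y.erase x₀) = ∑ r ∈ y.support.erase x₀, r * (y r : ℝ) := by
  rw [wsum_def, Finsupp.support_erase]
  refine Finset.sum_congr rfl fun r hr => ?_
  rw [Finsupp.erase_ne (Finset.ne_of_mem_erase hr)]

lemma split_fval (g : ℝ → ℝ) (y : ℝ →₀ ℕ) (x₀ : ℝ) :
    fval g y = g x₀ * (y x₀ : ℝ) + fval g (y.erase x₀) := by
  conv_lhs => rw [← Finsupp.single_add_erase x₀ y]
  rw [fval_add, fval_single]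

lemma split_wsum (y : ℝ →₀ ℕ) (x₀ : ℝ) :
    wsum y = x₀ * (y x₀ : ℝ) + wsum (y.erase x₀) := by
  conv_lhs => rw [← Finsupp.single_add_erase x₀ y]
  rw [wsum_add, wsum_single]

lemma feasible_iff (f : ℝ) (y : ℝ →₀ ℕ) : Feasible f y ↔ ∃ z : ℤ, wsum y - f = (z : ℝ) :=
  Iff.rfl

lemma valid_iff (f : ℝ) (π : ℝ → ℝ) :
    Valid f π ↔ (∀ x, 0 ≤ π x) ∧ ∀ y : ℝ →₀ ℕ, Feasible f y → 1 ≤ fval π y := Iff.rfl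

lemma fval_nonneg {g : ℝ → ℝ} (hg : ∀ x, 0 ≤ g x) (y : ℝ →₀ ℕ) : 0 ≤ fval g y :=
  Finset.sum_nonneg fun r _ => mul_nonneg (hg r) (by positivity)

/-- The key consequence of minimality: the value at any point cannot be decreased. -/
lemma decrease {f : ℝ} {π : ℝ → ℝ} (hπ : MinimalValid f π) (x₀ c : ℝ)
    (hc0 : 0 ≤ c) (hlt : c < π x₀) :
    ∃ y : ℝ →₀ ℕ, Feasible f y ∧ x₀ ∈ y.support ∧
      c * (y x₀ : ℝ) + fval π (y.erase x₀) < 1 := by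
  by_contra hcon
  push_neg at hcon
  apply hπ.2
  refine ⟨Function.update π x₀ c, ⟨?_, ?_⟩, ?_, ?_⟩
  · intro x
    rcases eq_or_ne x x₀ with rfl | hx
    · simpa using hc0
    · rw [Function.update_of_ne hx]; exact hπ.1.1 x
  · intro y hy
    show 1 ≤ fval (Function.update π x₀ c) y
    by_cases hx : x₀ ∈ y.support
    · rw [split_fval _ y x₀, Function.update_self]
      have : fval (Function.update π x₀ c) (y.erase x₀) = fval π (y.erase x₀) := by
        rw [fval_erase, fval_erase]
        refine Finset.sum_congr rfl fun r hr => ?_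
        rw [Function.update_of_ne (Finset.ne_of_mem_erase hr)]
      rw [this]
      exact hcon y hy hx
    · have : fval (Function.update π x₀ c) y = fval π y := by
        rw [fval_def, fval_def]
        refine Finset.sum_congr rfl fun r hr => ?_
        rw [Function.update_of_ne (fun hr' : r = x₀ => hx (hr' ▸ hr))]
      rw [this]
      exact hπ.1.2 y hy
  · intro x
    rcases eq_or_ne x x₀ with rfl | hx
    · rw [Function.update_self]; exact hlt.le
    · rw [Function.update_of_ne hx]
  · intro he
    have := congrFun he x₀
    rw [Function.update_self] at this
    exact absurd this hlt.ne


lemma mem_support_one_le {y : ℝ →₀ ℕ} {x : ℝ} (hx : x ∈ y.support) : (1 : ℝ) ≤ (y x : ℝ) := by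
  have := Finsupp.mem_support_iff.1 hx
  exact_mod_cast Nat.one_le_iff_ne_zero.2 this

lemma pi_zero {f : ℝ} {π : ℝ → ℝ} (hπ : MinimalValid f π) : π 0 = 0 := by
  rcases eq_or_lt_of_le (hπ.1.1 0) with h | h
  · exact h.symm
  · exfalso
    obtain ⟨y, hyF, hmem, hsum⟩ := decrease hπ 0 0 le_rfl h
    have hfe : Feasible f (y.erase 0) := by
      obtain ⟨z, hz⟩ := id hyF
      refine ⟨z, ?_⟩
      replace hz : wsum y - f = (z:ℝ) := hz
      show wsum (Finsupp.erase 0 y) - f = (z:ℝ)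
      have h : wsum (Finsupp.erase 0 y) = wsum y := by
        simpa using (split_wsum y 0).symm
      rw [h]; exact hz
    have := hπ.1.2 _ hfe
    rw [← fval_def] at this
    have h2 : fval π (y.erase 0) < 1 := by
      have h0 : (0:ℝ) * (y 0 : ℝ) = 0 := by ring
      linarith [hsum]
    linarith

lemma subadd {f : ℝ} {π : ℝ → ℝ} (hπ : MinimalValid f π) (a b : ℝ) :
    π (a + b) ≤ π a + π b := by
  by_contra hlt
  push_neg at hlt
  have hc0 : 0 ≤ π a + π b := add_nonneg (hπ.1.1 a) (hπ.1.1 b)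
  obtain ⟨y, hyF, hmem, hsum⟩ := decrease hπ (a + b) _ hc0 hlt
  set m := y (a + b) with hm
  set y' : ℝ →₀ ℕ := Finsupp.single a m + Finsupp.single b m + y.erase (a + b) with hy'
  have hfe : Feasible f y' := by
    obtain ⟨z, hz⟩ := id hyF
    refine ⟨z, ?_⟩
    replace hz : wsum y - f = (z:ℝ) := hz
    show wsum y' - f = (z:ℝ)
    have h1 : wsum y' = a * m + b * m + wsum (y.erase (a+b)) := by
      rw [hy', wsum_add, wsum_add, wsum_single, wsum_single]
    have h2 := split_wsum y (a + b)
    rw [h2] at hz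
    have hexp : (a + b) * ((y (a+b) : ℕ) : ℝ) = a * (m:ℝ) + b * (m:ℝ) := by
      rw [hm]; ring
    rw [h1]
    linarith [hz, hexp]
  have hval := hπ.1.2 _ hfe
  rw [← fval_def] at hval
  have h1 : fval π y' = π a * m + π b * m + fval π (y.erase (a+b)) := by
    rw [hy', fval_add, fval_add, fval_single, fval_single]
  have hm1 : (1:ℝ) ≤ (m:ℝ) := mem_support_one_le hmem
  nlinarith [hval, hsum, h1]

lemma natmul {f : ℝ} {π : ℝ → ℝ} (hπ : MinimalValid f π) (a : ℝ) (n : ℕ) :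
    π (a * n) ≤ π a * n := by
  induction n with
  | zero => simp [pi_zero hπ]
  | succ n ih =>
      have : a * (n + 1 : ℕ) = a * n + a := by push_cast; ring
      rw [this]
      calc π (a * n + a) ≤ π (a * n) + π a := subadd hπ _ _
        _ ≤ π a * n + π a := by linarith
        _ = π a * (n + 1 : ℕ) := by push_cast; ring

/-- iterated subadditivity -/
lemma iter_subadd {f : ℝ} {π : ℝ → ℝ} (hπ : MinimalValid f π) (z : ℝ →₀ ℕ) :
    π (wsum z) ≤ fval π z := by
  induction z using Finsupp.induction with
  | zero => simp [wsum, fval, pi_zero hπ]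
  | single_add a n z ha hn ih =>
      rw [wsum_add, fval_add, wsum_single, fval_single]
      calc π (a * n + wsum z) ≤ π (a * n) + π (wsum z) := subadd hπ _ _
        _ ≤ π a * n + fval π z := add_le_add (natmul hπ a n) ih

lemma single_ge {f : ℝ} {π : ℝ → ℝ} (hπ : Valid f π) (J : ℤ) : 1 ≤ π (f + J) := by
  have hf : Feasible f (Finsupp.single (f + J) 1) := by
    rw [feasible_iff]
    exact ⟨J, by rw [wsum_single]; push_cast; ring⟩
  have := hπ.2 _ hf
  rw [← fval_def, fval_single] at this
  simpa using this

lemma pair_ge {f : ℝ} {π : ℝ → ℝ} (hπ : Valid f π) (a b : ℝ) (k : ℤ) (hab : a + b = f + k) :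
    1 ≤ π a + π b := by
  have hf : Feasible f (Finsupp.single a 1 + Finsupp.single b 1) := by
    rw [feasible_iff]
    exact ⟨k, by rw [wsum_add, wsum_single, wsum_single]; push_cast; linarith [hab]⟩
  have := hπ.2 _ hf
  rw [← fval_def, fval_add, fval_single, fval_single] at this
  simpa using this

lemma le_one {f : ℝ} {π : ℝ → ℝ} (hπ : MinimalValid f π) (x : ℝ) : π x ≤ 1 := by
  by_contra hlt
  push_neg at hlt
  obtain ⟨y, hyF, hmem, hsum⟩ := decrease hπ x 1 zero_le_one hlt
  have h1 : (1:ℝ) ≤ (y x : ℝ) := mem_support_one_le hmem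
  have h2 : 0 ≤ fval π (y.erase x) := fval_nonneg hπ.1.1 _
  linarith


lemma sym {f : ℝ} {π : ℝ → ℝ} (hπ : MinimalValid f π) (x : ℝ) :
    π x + π (f - x) = 1 := by
  have hge : 1 ≤ π x + π (f - x) := pair_ge hπ.1 x (f - x) 0 (by push_cast; ring)
  by_contra hne
  have hgt : 1 < π x + π (f - x) := lt_of_le_of_ne hge (fun h' => hne h'.symm)
  have h1 : π (f - x) ≤ 1 := le_one hπ (f - x)
  have hc0 : 0 ≤ 1 - π (f - x) := by linarith
  have hclt : 1 - π (f - x) < π x := by linarith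
  obtain ⟨y, hyF, hmem, hsum⟩ := decrease hπ x _ hc0 hclt
  obtain ⟨k₀, hk₀⟩ := id hyF
  replace hk₀ : wsum y - f = (k₀ : ℝ) := hk₀
  have hmne : y x ≠ 0 := Finsupp.mem_support_iff.1 hmem
  obtain ⟨m, hm⟩ : ∃ n : ℕ, y x = n := ⟨_, rfl⟩
  rw [hm] at hsum hmne
  have hm1 : (1:ℝ) ≤ (m:ℝ) := by exact_mod_cast Nat.one_le_iff_ne_zero.2 hmne
  set B := wsum (y.erase x) with hB
  have hBval : π B ≤ fval π (y.erase x) := iter_subadd hπ _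
  have hB0 : 0 ≤ π B := hπ.1.1 B
  have hBeq : B = f + (k₀:ℝ) - x * m := by
    have hsp := split_wsum y x
    rw [hm] at hsp
    linarith [hsp, hk₀]
  have hmain : (1 - π (f - x)) * m + π B < 1 := by linarith [hsum, hBval]
  -- Claim: m * π (f - x) ≤ m - 1 + π B ; this contradicts hmain.
  have hclaim : (m:ℝ) * π (f - x) ≤ (m:ℝ) - 1 + π B := by
    by_contra hcl
    push_neg at hcl
    have hm0 : (0:ℝ) < m := by linarith
    have hc₂0 : 0 ≤ ((m:ℝ) - 1 + π B) / m := div_nonneg (by linarith) hm0.le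
    have hc₂lt : ((m:ℝ) - 1 + π B) / m < π (f - x) := by
      rw [div_lt_iff₀ hm0]; linarith [hcl]
    obtain ⟨y₂, hy₂F, hmem₂, hsum₂⟩ := decrease hπ (f - x) _ hc₂0 hc₂lt
    obtain ⟨j, hj⟩ := id hy₂F
    replace hj : wsum y₂ - f = (j : ℝ) := hj
    have hkne : y₂ (f - x) ≠ 0 := Finsupp.mem_support_iff.1 hmem₂
    obtain ⟨k, hk⟩ : ∃ n : ℕ, y₂ (f - x) = n := ⟨_, rfl⟩
    rw [hk] at hsum₂ hkne
    have hk1 : (1:ℝ) ≤ (k:ℝ) := by exact_mod_cast Nat.one_le_iff_ne_zero.2 hkne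
    have hk0 : (0:ℝ) < k := by linarith
    set B₂ := wsum (y₂.erase (f - x)) with hB₂
    have hB₂val : π B₂ ≤ fval π (y₂.erase (f - x)) := iter_subadd hπ _
    have hB₂0 : 0 ≤ π B₂ := hπ.1.1 B₂
    have hB₂eq : B₂ = f + (j:ℝ) - (f - x) * k := by
      have hsp := split_wsum y₂ (f - x)
      rw [hk] at hsp
      linarith [hsp, hj]
    have hmain₂ : (((m:ℝ) - 1 + π B) / m) * k + π B₂ < 1 := by linarith [hsum₂, hB₂val]
    have hkey : π (B₂ * m + B * k) ≤ π B₂ * m + π B * k := by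
      have h' := iter_subadd hπ (Finsupp.single B₂ m + Finsupp.single B k)
      rw [wsum_add, wsum_single, wsum_single, fval_add, fval_single, fval_single] at h'
      exact h'
    have hlow : (m:ℝ) + (k:ℝ) - (m:ℝ) * (k:ℝ) ≤ π (B₂ * m + B * k) := by
      rcases eq_or_ne m 1 with rfl | hm1'
      · have heq : B₂ * (1:ℕ) + B * k = f + ((j + k * k₀ : ℤ) : ℝ) := by
          rw [hBeq, hB₂eq]; push_cast; ring
        rw [heq]
        have hJ := single_ge hπ.1 (j + k * k₀)
        push_cast at hJ ⊢
        linarith [hJ]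
      rcases eq_or_ne k 1 with rfl | hk1'
      · have heq : B₂ * m + B * (1:ℕ) = f + ((m * j + k₀ : ℤ) : ℝ) := by
          rw [hBeq, hB₂eq]; push_cast; ring
        rw [heq]
        have hJ := single_ge hπ.1 (m * j + k₀)
        push_cast at hJ ⊢
        linarith [hJ]
      · have hm2 : (2:ℝ) ≤ (m:ℝ) := by
          have : 2 ≤ m := by omega
          exact_mod_cast this
        have hk2 : (2:ℝ) ≤ (k:ℝ) := by
          have : 2 ≤ k := by omega
          exact_mod_cast this
        have hq0 : (m:ℝ) + (k:ℝ) - (m:ℝ) * (k:ℝ) ≤ 0 := by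
          nlinarith [mul_nonneg (by linarith : (0:ℝ) ≤ (m:ℝ) - 2) (by linarith : (0:ℝ) ≤ (k:ℝ) - 2)]
        exact hq0.trans (hπ.1.1 _)
    have h5 := mul_lt_mul_of_pos_left hmain₂ hm0
    have h6 : (m:ℝ) * ((((m:ℝ) - 1 + π B) / m) * k + π B₂)
        = ((m:ℝ) - 1 + π B) * k + (m:ℝ) * π B₂ := by
      field_simp
    have hchain : (m:ℝ) + (k:ℝ) - (m:ℝ) * (k:ℝ) ≤ π B₂ * m + π B * k :=
      hlow.trans hkey
    rw [h6] at h5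
    nlinarith [h5, hchain]
  linarith [hmain, hclaim]


lemma chain_lb (f : ℝ) (C : Set (ℝ → ℝ)) (hC : ∀ ρ ∈ C, Valid f ρ)
    (hchain : ∀ ρ₁ ∈ C, ∀ ρ₂ ∈ C, (∀ x, ρ₁ x ≤ ρ₂ x) ∨ (∀ x, ρ₂ x ≤ ρ₁ x))
    (ρ₀ : ℝ → ℝ) (hρ₀ : ρ₀ ∈ C) :
    ∃ lb : ℝ → ℝ, Valid f lb ∧ ∀ ρ ∈ C, ∀ x, lb x ≤ ρ x := by
  set lb : ℝ → ℝ := fun x => sInf ((fun ρ : ℝ → ℝ => ρ x) '' C) with hlb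
  have hbdd : ∀ x, BddBelow ((fun ρ : ℝ → ℝ => ρ x) '' C) := by
    intro x
    refine ⟨0, ?_⟩
    rintro v ⟨ρ, hρ, rfl⟩
    exact (hC ρ hρ).1 x
  have hne : ∀ x, ((fun ρ : ℝ → ℝ => ρ x) '' C).Nonempty := fun x => ⟨ρ₀ x, ρ₀, hρ₀, rfl⟩
  have hlb_le : ∀ ρ ∈ C, ∀ x, lb x ≤ ρ x := fun ρ hρ x => csInf_le (hbdd x) ⟨ρ, hρ, rfl⟩
  have hlb0 : ∀ x, 0 ≤ lb x := by
    intro x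
    refine le_csInf (hne x) ?_
    rintro v ⟨ρ, hρ, rfl⟩
    exact (hC ρ hρ).1 x
  refine ⟨lb, ⟨hlb0, ?_⟩, hlb_le⟩
  intro y hy
  have hsel : ∀ ε : ℝ, 0 < ε → ∀ F : Finset ℝ, ∃ ρ ∈ C, ∀ r ∈ F, ρ r ≤ lb r + ε := by
    intro ε hε F
    induction F using Finset.induction_on with
    | empty => exact ⟨ρ₀, hρ₀, by simp⟩
    | @insert a F haF ih =>
        obtain ⟨ρ₁, hρ₁C, hρ₁⟩ := ih
        have hlt : sInf ((fun ρ : ℝ → ℝ => ρ a) '' C) < lb a + ε := lt_add_of_pos_right _ hε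
        obtain ⟨v, ⟨ρ₂, hρ₂C, rfl⟩, hv⟩ := exists_lt_of_csInf_lt (hne a) hlt
        rcases hchain ρ₁ hρ₁C ρ₂ hρ₂C with h12 | h21
        · refine ⟨ρ₁, hρ₁C, ?_⟩
          intro r hr
          rcases Finset.mem_insert.1 hr with rfl | hr'
          · exact (h12 r).trans hv.le
          · exact hρ₁ r hr'
        · refine ⟨ρ₂, hρ₂C, ?_⟩
          intro r hr
          rcases Finset.mem_insert.1 hr with rfl | hr'
          · exact hv.le
          · exact (h21 r).trans (hρ₁ r hr')
  show 1 ≤ fval lb y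
  set N : ℝ := ∑ r ∈ y.support, (y r : ℝ) with hN
  have hN0 : 0 ≤ N := Finset.sum_nonneg fun r _ => by positivity
  have key : ∀ ε : ℝ, 0 < ε → 1 ≤ fval lb y + ε * N := by
    intro ε hε
    obtain ⟨ρ, hρC, hρ⟩ := hsel ε hε y.support
    have h1 : 1 ≤ fval ρ y := (hC ρ hρC).2 y hy
    have h2 : fval ρ y ≤ fval lb y + ε * N := by
      rw [fval_def, fval_def, hN, Finset.mul_sum, ← Finset.sum_add_distrib]
      refine Finset.sum_le_sum fun r hr => ?_
      have := hρ r hr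
      have hyr : (0:ℝ) ≤ (y r : ℝ) := by positivity
      nlinarith [this, hyr]
    linarith
  by_contra hlt
  push_neg at hlt
  have hε : 0 < (1 - fval lb y) / (N + 1) := by
    apply div_pos (by linarith) (by linarith)
  have := key _ hε
  have hNN : (1 - fval lb y) / (N + 1) * N < 1 - fval lb y := by
    rw [div_mul_eq_mul_div, div_lt_iff₀ (by linarith)]
    nlinarith
  linarith

lemma exists_minimal (f : ℝ) (π₀ : ℝ → ℝ) (h₀ : Valid f π₀) :
    ∃ π₁ : ℝ → ℝ, MinimalValid f π₁ ∧ ∀ x, π₁ x ≤ π₀ x := by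
  have hih : ∀ c ⊆ {ρ : (ℝ → ℝ)ᵒᵈ | Valid f (OrderDual.ofDual ρ)},
      IsChain (· ≤ ·) c → ∀ y₀ ∈ c, ∃ ub ∈ {ρ : (ℝ → ℝ)ᵒᵈ | Valid f (OrderDual.ofDual ρ)},
        ∀ z ∈ c, z ≤ ub := by
    intro c hcs hchain y₀ hy₀
    obtain ⟨lb, hlbV, hlb_le⟩ := chain_lb f (OrderDual.ofDual '' c)
      (by rintro ρ ⟨ρ', hρ', rfl⟩; exact hcs hρ')
      (by
        rintro ρ₁ ⟨ρ₁', h₁, rfl⟩ ρ₂ ⟨ρ₂', h₂, rfl⟩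
        rcases eq_or_ne ρ₁' ρ₂' with rfl | hne
        · exact Or.inl fun x => le_rfl
        · rcases hchain h₁ h₂ hne with h | h
          · exact Or.inr fun x => h x
          · exact Or.inl fun x => h x)
      (OrderDual.ofDual y₀) ⟨y₀, hy₀, rfl⟩
    refine ⟨OrderDual.toDual lb, hlbV, ?_⟩
    intro z hz
    exact fun x => hlb_le (OrderDual.ofDual z) ⟨z, hz, rfl⟩ x
  obtain ⟨m, hxm, hmem, hmax⟩ := zorn_le_nonempty₀ (α := (ℝ → ℝ)ᵒᵈ)
    {ρ : (ℝ → ℝ)ᵒᵈ | Valid f (OrderDual.ofDual ρ)} hih (OrderDual.toDual π₀) h₀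
  refine ⟨OrderDual.ofDual m, ⟨hmem, ?_⟩, ?_⟩
  · rintro ⟨π', hπ'V, hπ'le, hπ'ne⟩
    have h1 : m ≤ OrderDual.toDual π' := OrderDual.le_toDual.2 hπ'le
    have h2 := hmax (y := OrderDual.toDual π') hπ'V h1
    have h3 : OrderDual.ofDual m ≤ π' := OrderDual.toDual_le.1 h2
    exact hπ'ne (funext fun x => le_antisymm (hπ'le x) (h3 x))
  · exact fun x => (OrderDual.toDual_le.1 hxm) x


def Pset' (f : ℝ) (π : ℝ → ℝ) : Set (ℝ →₀ ℕ) :=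
  {y | Feasible f y ∧ fval π y = 1}

lemma pair_mem_Pset' {f : ℝ} {π : ℝ → ℝ} (hπ : MinimalValid f π) (a : ℝ) :
    (Finsupp.single a 1 + Finsupp.single (f - a) 1) ∈ Pset' f π := by
  constructor
  · exact ⟨0, by rw [← wsum_def, wsum_add, wsum_single, wsum_single]; push_cast; ring⟩
  · rw [fval_add, fval_single, fval_single]
    have := sym hπ a
    push_cast
    linarith

lemma Estep {f : ℝ} {π : ℝ → ℝ} (hπ : MinimalValid f π) (ρ : ℝ → ℝ)
    (hP : Pset' f π ⊆ Pset' f ρ) :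
    ∀ u v : ℝ, π u + π v = π (u + v) → ρ u + ρ v = ρ (u + v) := by
  intro u v huv
  set w := f - (u + v) with hw
  have h3 : (Finsupp.single u 1 + Finsupp.single v 1 + Finsupp.single w 1) ∈ Pset' f π := by
    constructor
    · exact ⟨0, by
        rw [← wsum_def, wsum_add, wsum_add, wsum_single, wsum_single, wsum_single]
        push_cast; rw [hw]; ring⟩
    · rw [fval_add, fval_add, fval_single, fval_single, fval_single]
      have := sym hπ (u + v)
      push_cast
      rw [hw]
      linarith [huv]
  have h2 : (Finsupp.single (u + v) 1 + Finsupp.single w 1) ∈ Pset' f π := by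
    have := pair_mem_Pset' hπ (u + v)
    rw [← hw] at this
    exact this
  have g3 := (hP h3).2
  have g2 := (hP h2).2
  rw [fval_add, fval_add, fval_single, fval_single, fval_single] at g3
  rw [fval_add, fval_single, fval_single] at g2
  push_cast at g3 g2
  linarith

end GJaux

open GJaux

lemma Pset_eq' (f : ℝ) (π : ℝ → ℝ) : Pset f π = Pset' f π := rfl

theorem stmt0 (f : ℝ) (hf : f ∈ Set.Ioo (0 : ℝ) 1) (π : ℝ → ℝ)
    (hπ : MinimalValid f π)
    (h : ∀ π' : ℝ → ℝ, MinimalValid f π' → Eset π ⊆ Eset π' → π' = π) :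
    IsFacet f π := by
  refine ⟨hπ.1, ?_⟩
  intro π' hπ' hPP
  have hPP' : Pset' f π ⊆ Pset' f π' := hPP
  -- the average
  set πb : ℝ → ℝ := fun x => (π x + π' x) / 2 with hπb
  have hπbV : Valid f πb := by
    constructor
    · intro x
      have := hπ.1.1 x
      have := hπ'.1 x
      simp only [hπb]
      linarith
    · intro y hy
      have h1 := hπ.1.2 y hy
      have h2 := hπ'.2 y hy
      show 1 ≤ fval πb y
      have : fval πb y = (fval π y + fval π' y) / 2 := by
        rw [fval_def, fval_def, fval_def, ← Finset.sum_add_distrib, Finset.sum_div]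
        refine Finset.sum_congr rfl fun r hr => ?_
        simp only [hπb]
        ring
      rw [this]
      rw [← fval_def] at h1 h2
      linarith
  obtain ⟨πt, hπt, hπt_le⟩ := exists_minimal f πb hπbV
  have hPt : Pset' f π ⊆ Pset' f πt := by
    intro y hy
    refine ⟨hy.1, le_antisymm ?_ (hπt.1.2 y hy.1)⟩
    have hle : fval πt y ≤ fval πb y := by
      rw [fval_def, fval_def]
      refine Finset.sum_le_sum fun r hr => ?_
      have := hπt_le r
      have hyr : (0:ℝ) ≤ (y r : ℝ) := by positivity
      nlinarith
    have heq : fval πb y = (fval π y + fval π' y) / 2 := by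
      rw [fval_def, fval_def, fval_def, ← Finset.sum_add_distrib, Finset.sum_div]
      refine Finset.sum_congr rfl fun r hr => ?_
      simp only [hπb]
      ring
    have h1 : fval π y = 1 := hy.2
    have h2 : fval π' y = 1 := (hPP' hy).2
    rw [heq, h1, h2] at hle
    linarith
  have hEt : Eset π ⊆ Eset πt := by
    rintro ⟨u, v⟩ huv
    exact Estep hπ πt hPt u v huv
  have hteq : πt = π := h πt hπt hEt
  have hle' : ∀ x, π x ≤ π' x := by
    intro x
    have := hπt_le x
    rw [hteq] at this
    simp only [hπb] at this
    linarith
  funext x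
  have hp := pair_mem_Pset' hπ x
  have hp' := hPP' hp
  have hs := sym hπ x
  have e1 : π' x + π' (f - x) = 1 := by
    have := hp'.2
    rw [fval_add, fval_single, fval_single] at this
    push_cast at this
    linarith
  have := hle' x
  have := hle' (f - x)
  linarith
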